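/- Suppose for each of k windows the algorithm's regret against the best response within the window's restricted action set is at most 3τ(√(2|T_i| log i) + (log i)/8), and the restricted best response is within ε of the global best response in average loss per round (i.e., min over restricted set minus min over full set is at most ε·|T_i|). Then the average regret against the globally best fixed point is at most ε + 3τ(√(2k·log(k)/T) + k·log(k)/(8T)) per round; in particular as T → ∞ the time-averaged pair of strategies is an ε-Nash equilibrium. -/

import Mathlib

open Real

noncomputable def dot {n : ℕ} (x y : Fin n → ℝ) : ℝ := ∑ i, x i * y i

lemma dot_cont_right {n : ℕ} (v : Fin n → ℝ) : Continuous (fun x : Fin n → ℝ => dot v x) := by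
  unfold dot
  exact continuous_finset_sum _ fun j _ => continuous_const.mul (continuous_apply j)

lemma dot_cont_left {n : ℕ} (v : Fin n → ℝ) : Continuous (fun x : Fin n → ℝ => dot x v) := by
  unfold dot
  exact continuous_finset_sum _ fun j _ => (continuous_apply j).mul continuous_const

lemma sqrt_sum_card {k : ℕ} (w : Fin k → ℕ) :
    ∑ i, Real.sqrt (w i) ≤ Real.sqrt (k * ∑ i, (w i : ℝ)) := by
  rw [show (k : ℝ) = ∑ _i : Fin k, (1:ℝ) by simp]
  refine (Real.le_sqrt (Finset.sum_nonneg fun i _ => Real.sqrt_nonneg _) (by positivity)).2 ?_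
  calc (∑ i, Real.sqrt (w i)) ^ 2 = (∑ i, (1:ℝ) * Real.sqrt (w i)) ^ 2 := by simp
    _ ≤ (∑ _i : Fin k, (1:ℝ)^2) * ∑ i, (Real.sqrt (w i))^2 :=
        Finset.sum_mul_sq_le_sq_mul_sq _ _ _
    _ = (∑ _i : Fin k, (1:ℝ)) * ∑ i, (w i : ℝ) := by
        simp [Real.sq_sqrt (Nat.cast_nonneg _)]

/-- With ε-best responses: if in each of k windows the regret against the best point of the
window's restricted set is at most 3τ(√(2|T_i| log i) + (log i)/8), the restricted best
response is ε|T_i|-close to the global one, and the adversary is no-regret, then the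
per-round regret against the globally best fixed point is at most ε + δ(T) with
δ(T) = 3τ(√(2k log k/T) + k log k/(8T)); consequently the pair of time averages is an
(ε + δ(T) + √(log L/(2T)))-Nash equilibrium, hence an ε-Nash equilibrium as T → ∞. -/
theorem stmt_19 {n : ℕ} (ΔL D : Set (Fin n → ℝ))
    (hΔLcomp : IsCompact ΔL) (hΔLconv : Convex ℝ ΔL) (hΔLne : ΔL.Nonempty)
    (hDcomp : IsCompact D) (hDconv : Convex ℝ D) (hDne : D.Nonempty)
    (τ ε : ℝ) (hτ : 0 < τ) (hε : 0 ≤ ε)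
    (L k T : ℕ) (hL : 1 ≤ L) (hk : 1 ≤ k) (hT : 0 < T)
    (W : Fin k → Finset ℕ)
    (hdisj : ∀ i j, i ≠ j → Disjoint (W i) (W j))
    (hcover : Finset.univ.biUnion W = Finset.range T)
    (l : ℕ → Fin n → ℝ) (hl : ∀ t, l t ∈ ΔL)
    (d : ℕ → Fin n → ℝ) (hd : ∀ t, d t ∈ D)
    (A : Fin k → Set (Fin n → ℝ)) (hAne : ∀ i, (A i).Nonempty) (hAsub : ∀ i, A i ⊆ D)
    (hwinreg : ∀ i : Fin k,
        (∑ t ∈ W i, dot (l t) (d t))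
          - sInf ((fun d' => ∑ t ∈ W i, dot (l t) d') '' A i)
        ≤ 3 * τ * (Real.sqrt (2 * (W i).card * Real.log ((i : ℕ) + 1))
            + Real.log ((i : ℕ) + 1) / 8))
    (hεbr : ∀ i : Fin k,
        sInf ((fun d' => ∑ t ∈ W i, dot (l t) d') '' A i)
          - sInf ((fun d' => ∑ t ∈ W i, dot (l t) d') '' D) ≤ ε * (W i).card)
    (hadv : sSup ((fun l' => ∑ t ∈ Finset.range T, dot l' (d t)) '' ΔL)
        - ∑ t ∈ Finset.range T, dot (l t) (d t) ≤ Real.sqrt (T * Real.log L / 2))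
    (lbar dbar : Fin n → ℝ)
    (hlbar : lbar = fun i => (1 / T : ℝ) * ∑ t ∈ Finset.range T, l t i)
    (hdbar : dbar = fun i => (1 / T : ℝ) * ∑ t ∈ Finset.range T, d t i)
    (δ : ℝ) (hδ : δ = 3 * τ * (Real.sqrt (2 * k * Real.log k / T)
        + k * Real.log k / (8 * T))) :
    ((1 / T : ℝ) * ∑ t ∈ Finset.range T, dot (l t) (d t)
        - sInf ((fun d' => dot lbar d') '' D) ≤ ε + δ) ∧
    (sSup ((fun l' => dot l' dbar) '' ΔL) - (ε + δ + Real.sqrt (Real.log L / (2 * T)))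
        ≤ dot lbar dbar) ∧
    (dot lbar dbar
        ≤ sInf ((fun d' => dot lbar d') '' D) + (ε + δ + Real.sqrt (Real.log L / (2 * T)))) := by
  have hT0 : (0:ℝ) < T := by exact_mod_cast hT
  have hk1 : (1:ℝ) ≤ k := by exact_mod_cast hk
  have hlogk : 0 ≤ Real.log k := Real.log_nonneg hk1
  have hlogL : 0 ≤ Real.log L := Real.log_nonneg (by exact_mod_cast hL)
  set S := ∑ t ∈ Finset.range T, dot (l t) (d t) with hSdef
  -- memberships of averages
  have hlbarΔ : lbar ∈ ΔL := by
    have he : lbar = ∑ t ∈ Finset.range T, (1/T:ℝ) • l t := by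
      funext i
      rw [hlbar]
      simp [Finset.sum_apply, Finset.mul_sum]
    rw [he]
    refine hΔLconv.sum_mem (fun t _ => by positivity) ?_ (fun t _ => hl t)
    rw [Finset.sum_const, Finset.card_range, nsmul_eq_mul]
    field_simp
  have hdbarD : dbar ∈ D := by
    have he : dbar = ∑ t ∈ Finset.range T, (1/T:ℝ) • d t := by
      funext i
      rw [hdbar]
      simp [Finset.sum_apply, Finset.mul_sum]
    rw [he]
    refine hDconv.sum_mem (fun t _ => by positivity) ?_ (fun t _ => hd t)
    rw [Finset.sum_const, Finset.card_range, nsmul_eq_mul]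
    field_simp
  -- bilinearity of dot under averaging
  have hdotl : ∀ x : Fin n → ℝ, dot lbar x
      = (1/T:ℝ) * ∑ t ∈ Finset.range T, dot (l t) x := by
    intro x
    rw [hlbar]
    unfold dot
    simp only [Finset.sum_mul, Finset.mul_sum, mul_assoc]
    exact Finset.sum_comm
  have hdotr : ∀ x : Fin n → ℝ, dot x dbar
      = (1/T:ℝ) * ∑ t ∈ Finset.range T, dot x (d t) := by
    intro x
    rw [hdbar]
    unfold dot
    simp only [Finset.sum_mul, Finset.mul_sum]
    rw [Finset.sum_comm]
    congr 1; funext t; congr 1; funext j; ring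
  -- window decomposition
  have hPD : ((Finset.univ : Finset (Fin k)) : Set (Fin k)).PairwiseDisjoint W :=
    fun i _ j _ hij => hdisj i j hij
  have hdecomp : ∀ x : Fin n → ℝ, ∑ t ∈ Finset.range T, dot (l t) x
      = ∑ i : Fin k, ∑ t ∈ W i, dot (l t) x := by
    intro x
    rw [← hcover, Finset.sum_biUnion hPD]
  have hSdec : S = ∑ i : Fin k, ∑ t ∈ W i, dot (l t) (d t) := by
    rw [hSdef, ← hcover, Finset.sum_biUnion hPD]
  have hcard : ∑ i : Fin k, ((W i).card : ℝ) = T := by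
    have h := Finset.card_biUnion (s := (Finset.univ : Finset (Fin k))) (t := W)
      (fun i _ j _ hij => hdisj i j hij)
    rw [hcover, Finset.card_range] at h
    exact_mod_cast h.symm
  -- bound the sum of window regret terms by δ * T
  have hRsum : ∑ i : Fin k, (3 * τ * (Real.sqrt (2 * (W i).card * Real.log ((i:ℕ) + 1))
      + Real.log ((i:ℕ) + 1) / 8)) ≤ δ * T := by
    have hlogle : ∀ i : Fin k, Real.log ((i:ℕ) + 1) ≤ Real.log k := by
      intro i
      exact Real.log_le_log (by positivity) (by exact_mod_cast i.isLt)
    have hsq : ∀ i : Fin k, Real.sqrt (2 * (W i).card * Real.log ((i:ℕ) + 1))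
        ≤ Real.sqrt (2 * Real.log k) * Real.sqrt ((W i).card) := by
      intro i
      rw [← Real.sqrt_mul (mul_nonneg (by norm_num) hlogk) ((W i).card : ℝ)]
      apply Real.sqrt_le_sqrt
      have := hlogle i
      nlinarith [(Nat.cast_nonneg (W i).card : (0:ℝ) ≤ ((W i).card : ℝ))]
    have hsum1 : ∑ i : Fin k, Real.sqrt (2 * (W i).card * Real.log ((i:ℕ) + 1))
        ≤ Real.sqrt (2 * (k:ℝ) * T * Real.log k) := by
      calc ∑ i : Fin k, Real.sqrt (2 * (W i).card * Real.log ((i:ℕ) + 1))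
          ≤ ∑ i : Fin k, Real.sqrt (2 * Real.log k) * Real.sqrt ((W i).card) :=
            Finset.sum_le_sum (fun i _ => hsq i)
        _ = Real.sqrt (2 * Real.log k) * ∑ i : Fin k, Real.sqrt ((W i).card) := by
            rw [Finset.mul_sum]
        _ ≤ Real.sqrt (2 * Real.log k) * Real.sqrt ((k:ℝ) * ∑ i : Fin k, ((W i).card : ℝ)) := by
            apply mul_le_mul_of_nonneg_left (sqrt_sum_card _) (Real.sqrt_nonneg _)
        _ = Real.sqrt (2 * (k:ℝ) * T * Real.log k) := by
            rw [hcard, ← Real.sqrt_mul (by positivity)]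
            congr 1; ring
    have hsum2 : ∑ i : Fin k, Real.log ((i:ℕ) + 1) / 8 ≤ (k:ℝ) * Real.log k / 8 := by
      calc ∑ i : Fin k, Real.log ((i:ℕ) + 1) / 8 ≤ ∑ _i : Fin k, Real.log k / 8 :=
            Finset.sum_le_sum (fun i _ => by linarith [hlogle i])
        _ = (k:ℝ) * Real.log k / 8 := by
            rw [Finset.sum_const, Finset.card_univ, Fintype.card_fin, nsmul_eq_mul]; ring
    have hδT : δ * T = 3 * τ * (Real.sqrt (2 * (k:ℝ) * T * Real.log k)
        + (k:ℝ) * Real.log k / 8) := by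
      rw [hδ]
      have e1 : Real.sqrt (2 * k * Real.log k / T) * T
          = Real.sqrt (2 * (k:ℝ) * T * Real.log k) := by
        rw [show Real.sqrt (2 * (k:ℝ) * Real.log k / T) * T
            = Real.sqrt ((2 * (k:ℝ) * Real.log k / T) * T^2) by
              rw [Real.sqrt_mul (by positivity), Real.sqrt_sq hT0.le]]
        congr 1
        field_simp
      have e2 : (k:ℝ) * Real.log k / (8 * T) * T = (k:ℝ) * Real.log k / 8 := by
        field_simp
      calc 3 * τ * (Real.sqrt (2 * k * Real.log k / T) + k * Real.log k / (8 * T)) * T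
          = 3 * τ * (Real.sqrt (2 * k * Real.log k / T) * T + k * Real.log k / (8 * T) * T) := by
            ring
        _ = _ := by rw [e1, e2]
    rw [hδT]
    have h3τ : (0:ℝ) ≤ 3 * τ := by linarith
    calc ∑ i : Fin k, (3 * τ * (Real.sqrt (2 * (W i).card * Real.log ((i:ℕ) + 1))
          + Real.log ((i:ℕ) + 1) / 8))
        = 3 * τ * ((∑ i : Fin k, Real.sqrt (2 * (W i).card * Real.log ((i:ℕ) + 1)))
          + ∑ i : Fin k, Real.log ((i:ℕ) + 1) / 8) := by
          simp only [mul_add, Finset.sum_add_distrib, Finset.mul_sum]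
      _ ≤ 3 * τ * (Real.sqrt (2 * (k:ℝ) * T * Real.log k) + (k:ℝ) * Real.log k / 8) := by
          apply mul_le_mul_of_nonneg_left (by linarith) h3τ
  -- key per-point bound
  have hkey : ∀ d' ∈ D, S - ∑ t ∈ Finset.range T, dot (l t) d' ≤ (ε + δ) * T := by
    intro d' hd'
    have hper : ∀ i : Fin k, (∑ t ∈ W i, dot (l t) (d t)) - ∑ t ∈ W i, dot (l t) d'
        ≤ 3 * τ * (Real.sqrt (2 * (W i).card * Real.log ((i:ℕ) + 1))
            + Real.log ((i:ℕ) + 1) / 8) + ε * (W i).card := by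
      intro i
      have h3 : sInf ((fun d' => ∑ t ∈ W i, dot (l t) d') '' D) ≤ ∑ t ∈ W i, dot (l t) d' := by
        refine csInf_le ?_ ⟨d', hd', rfl⟩
        exact (hDcomp.image (continuous_finset_sum _ fun t _ => dot_cont_right (l t))).bddBelow
      linarith [hwinreg i, hεbr i]
    calc S - ∑ t ∈ Finset.range T, dot (l t) d'
        = ∑ i : Fin k, ((∑ t ∈ W i, dot (l t) (d t)) - ∑ t ∈ W i, dot (l t) d') := by
          rw [hSdec, hdecomp d', ← Finset.sum_sub_distrib]
      _ ≤ ∑ i : Fin k, (3 * τ * (Real.sqrt (2 * (W i).card * Real.log ((i:ℕ) + 1))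
            + Real.log ((i:ℕ) + 1) / 8) + ε * (W i).card) :=
          Finset.sum_le_sum (fun i _ => hper i)
      _ = (∑ i : Fin k, 3 * τ * (Real.sqrt (2 * (W i).card * Real.log ((i:ℕ) + 1))
            + Real.log ((i:ℕ) + 1) / 8)) + ε * ∑ i : Fin k, ((W i).card : ℝ) := by
          rw [Finset.sum_add_distrib, Finset.mul_sum]
      _ ≤ δ * T + ε * T := by rw [hcard]; linarith [hRsum]
      _ = (ε + δ) * T := by ring
  -- claim 1
  have claim1 : (1/T:ℝ) * S - sInf ((fun d' => dot lbar d') '' D) ≤ ε + δ := by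
    have hInf : (1/T:ℝ) * S - (ε + δ) ≤ sInf ((fun d' => dot lbar d') '' D) := by
      apply le_csInf (hDne.image _)
      rintro b ⟨d', hd', rfl⟩
      have h := hkey d' hd'
      show (1/T:ℝ) * S - (ε + δ) ≤ dot lbar d'
      rw [hdotl d']
      have h2 := mul_le_mul_of_nonneg_left h (by positivity : (0:ℝ) ≤ 1/T)
      rw [mul_sub] at h2
      have h3 : (1/T:ℝ) * ((ε + δ) * T) = ε + δ := by field_simp
      rw [h3] at h2
      linarith
    linarith
  -- adversary bound on sSup
  have hc : (1/T:ℝ) * Real.sqrt ((T:ℝ) * Real.log L / 2) = Real.sqrt (Real.log L / (2 * T)) := by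
    rw [show ((T:ℝ) * Real.log L / 2) = (Real.log L / (2 * T)) * T^2 by field_simp,
        Real.sqrt_mul (by positivity), Real.sqrt_sq hT0.le]
    field_simp
  have hSup : sSup ((fun l' => dot l' dbar) '' ΔL)
      ≤ (1/T:ℝ) * S + Real.sqrt (Real.log L / (2 * T)) := by
    apply csSup_le (hΔLne.image _)
    rintro b ⟨l', hl', rfl⟩
    have h1 : ∑ t ∈ Finset.range T, dot l' (d t)
        ≤ sSup ((fun l' => ∑ t ∈ Finset.range T, dot l' (d t)) '' ΔL) := by
      refine le_csSup ?_ ⟨l', hl', rfl⟩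
      exact (hΔLcomp.image (continuous_finset_sum _ fun t _ => dot_cont_left (d t))).bddAbove
    have h2 : ∑ t ∈ Finset.range T, dot l' (d t) ≤ S + Real.sqrt ((T:ℝ) * Real.log L / 2) := by
      linarith [hadv]
    show dot l' dbar ≤ (1/T:ℝ) * S + Real.sqrt (Real.log L / (2 * T))
    rw [hdotr l']
    have h3 := mul_le_mul_of_nonneg_left h2 (by positivity : (0:ℝ) ≤ 1/T)
    rw [mul_add, hc] at h3
    exact h3
  have hmemInf : sInf ((fun d' => dot lbar d') '' D) ≤ dot lbar dbar :=
    csInf_le (hDcomp.image (dot_cont_right lbar)).bddBelow ⟨dbar, hdbarD, rfl⟩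
  have hmemSup : dot lbar dbar ≤ sSup ((fun l' => dot l' dbar) '' ΔL) :=
    le_csSup (hΔLcomp.image (dot_cont_left dbar)).bddAbove ⟨lbar, hlbarΔ, rfl⟩
  exact ⟨claim1, by linarith, by linarith⟩
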